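/- Let U_F on ℂ²⊗H_F and U_R on ℂ²⊗H_R be linear maps with U_F(|0⟩|f⟩)=|0⟩|f₀⟩, U_F(|1⟩|f⟩)=|1⟩|f₃⟩, and (U_R⊗I_F)(|0⟩|r⟩|f_i⟩)=(γ|0⟩|r₀⟩+δ|1⟩|r₁⟩)|f_i⟩, (U_R⊗I_F)(|1⟩|r⟩|f_i⟩)=(δ|0⟩|r₂⟩+γ|1⟩|r₃⟩)|f_i⟩ with |γ|²+|δ|²=1. If the combined attack leaves the states |0⟩, |1⟩, and |+⟩ of the first register undisturbed (i.e., measurement of the first register in the appropriate basis always returns the original state), then δ = 0, |γ| = 1, |r₀⟩⊗|f₀⟩ = |r₃⟩⊗|f₃⟩, and consequently the joint probe state equals a fixed vector |R⟩⊗|F⟩ independent of the transmitted qubit state. -/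
import Mathlib


open scoped TensorProduct

noncomputable def ket0 : EuclideanSpace ℂ (Fin 2) := EuclideanSpace.single 0 1
noncomputable def ket1 : EuclideanSpace ℂ (Fin 2) := EuclideanSpace.single 1 1
noncomputable def ketPlus : EuclideanSpace ℂ (Fin 2) :=
  (Real.sqrt 2 : ℂ)⁻¹ • (ket0 + ket1)

section Aux

variable {M : Type*} [AddCommGroup M] [Module ℂ M]

/-- extract the coefficient of `ket i` from a tensor. -/
noncomputable def projT (i : Fin 2) : EuclideanSpace ℂ (Fin 2) ⊗[ℂ] M →ₗ[ℂ] M :=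
  (TensorProduct.lid ℂ M).toLinearMap ∘ₗ
    LinearMap.rTensor M (EuclideanSpace.projₗ i)

@[simp] lemma projT_tmul (i : Fin 2) (a : EuclideanSpace ℂ (Fin 2)) (x : M) :
    projT i (a ⊗ₜ[ℂ] x) = a i • x := by
  simp [projT]

@[simp] lemma ket0_apply_0 : ket0 0 = 1 := by simp [ket0]
@[simp] lemma ket0_apply_1 : ket0 1 = 0 := by simp [ket0]
@[simp] lemma ket1_apply_0 : ket1 0 = 0 := by simp [ket1]
@[simp] lemma ket1_apply_1 : ket1 1 = 1 := by simp [ket1]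

lemma tmul_ne_zero' {R F : Type*} [NormedAddCommGroup R] [InnerProductSpace ℂ R]
    [NormedAddCommGroup F] [InnerProductSpace ℂ F]
    {x : R} {y : F} (hx : x ≠ 0) (hy : y ≠ 0) : x ⊗ₜ[ℂ] y ≠ 0 := by
  intro h
  have := congrArg ((TensorProduct.lid ℂ ℂ).toLinearMap ∘ₗ
    TensorProduct.map (innerSL ℂ x).toLinearMap (innerSL ℂ y).toLinearMap) h
  simp only [LinearMap.comp_apply, TensorProduct.map_tmul, map_zero,
    LinearEquiv.coe_coe, TensorProduct.lid_tmul, ContinuousLinearMap.coe_coe,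
    innerSL_apply_apply, smul_eq_mul] at this
  rw [inner_self_eq_norm_sq_to_K (𝕜 := ℂ), inner_self_eq_norm_sq_to_K (𝕜 := ℂ)] at this
  have hx' : (‖x‖ : ℂ) ≠ 0 := by simpa using hx
  have hy' : (‖y‖ : ℂ) ≠ 0 := by simpa using hy
  exact (mul_ne_zero (pow_ne_zero 2 hx') (pow_ne_zero 2 hy')) this

end Aux

/-- Combined two-stage attack `(U_F, U_R)`: `U_F` fixes the probe states `f₀, f₃`, and
`W = U_R ⊗ I_F` acts on the qubit together with the probes `R ⊗ F` as prescribed.  If the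
qubit states |0⟩, |1⟩ and |+⟩ are all left undisturbed (the total state after the attack is
the original qubit state tensored with some probe state), then δ = 0, |γ| = 1,
`r₀⊗f₀ = r₃⊗f₃`, and the joint probe state is one fixed vector `RF` for all inputs. -/
theorem combined_attack_probe_fixed
    {R F : Type*} [NormedAddCommGroup R] [InnerProductSpace ℂ R] [FiniteDimensional ℂ R]
    [NormedAddCommGroup F] [InnerProductSpace ℂ F] [FiniteDimensional ℂ F]
    (W : EuclideanSpace ℂ (Fin 2) ⊗[ℂ] (R ⊗[ℂ] F) →ₗ[ℂ]
         EuclideanSpace ℂ (Fin 2) ⊗[ℂ] (R ⊗[ℂ] F))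
    (γ δ : ℂ) (r r0 r1 r2 r3 : R) (f f0 f3 : F)
    (hr : ‖r‖ = 1) (hr0 : ‖r0‖ = 1) (hr1 : ‖r1‖ = 1) (hr2 : ‖r2‖ = 1) (hr3 : ‖r3‖ = 1)
    (hf : ‖f‖ = 1) (hf0 : ‖f0‖ = 1) (hf3 : ‖f3‖ = 1)
    (hnorm : ‖γ‖ ^ 2 + ‖δ‖ ^ 2 = 1)
    -- action of U_R ⊗ I_F on the relevant vectors
    (hW0 : ∀ v : F, W (ket0 ⊗ₜ[ℂ] (r ⊗ₜ[ℂ] v)) =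
      γ • (ket0 ⊗ₜ[ℂ] (r0 ⊗ₜ[ℂ] v)) + δ • (ket1 ⊗ₜ[ℂ] (r1 ⊗ₜ[ℂ] v)))
    (hW1 : ∀ v : F, W (ket1 ⊗ₜ[ℂ] (r ⊗ₜ[ℂ] v)) =
      δ • (ket0 ⊗ₜ[ℂ] (r2 ⊗ₜ[ℂ] v)) + γ • (ket1 ⊗ₜ[ℂ] (r3 ⊗ₜ[ℂ] v)))
    -- undisturbed: after U_F (sending |0⟩f ↦ |0⟩f₀, |1⟩f ↦ |1⟩f₃) and then W,
    -- the first register is unchanged for the inputs |0⟩, |1⟩ and |+⟩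
    (hund0 : ∃ w : R ⊗[ℂ] F, W (ket0 ⊗ₜ[ℂ] (r ⊗ₜ[ℂ] f0)) = ket0 ⊗ₜ[ℂ] w)
    (hund1 : ∃ w : R ⊗[ℂ] F, W (ket1 ⊗ₜ[ℂ] (r ⊗ₜ[ℂ] f3)) = ket1 ⊗ₜ[ℂ] w)
    (hundPlus : ∃ w : R ⊗[ℂ] F,
      (Real.sqrt 2 : ℂ)⁻¹ • (W (ket0 ⊗ₜ[ℂ] (r ⊗ₜ[ℂ] f0)) + W (ket1 ⊗ₜ[ℂ] (r ⊗ₜ[ℂ] f3)))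
        = ketPlus ⊗ₜ[ℂ] w) :
    δ = 0 ∧ ‖γ‖ = 1 ∧ r0 ⊗ₜ[ℂ] f0 = r3 ⊗ₜ[ℂ] f3 ∧
    ∃ RF : R ⊗[ℂ] F,
      W (ket0 ⊗ₜ[ℂ] (r ⊗ₜ[ℂ] f0)) = γ • (ket0 ⊗ₜ[ℂ] RF) ∧
      W (ket1 ⊗ₜ[ℂ] (r ⊗ₜ[ℂ] f3)) = γ • (ket1 ⊗ₜ[ℂ] RF) ∧
      (Real.sqrt 2 : ℂ)⁻¹ • (W (ket0 ⊗ₜ[ℂ] (r ⊗ₜ[ℂ] f0)) + W (ket1 ⊗ₜ[ℂ] (r ⊗ₜ[ℂ] f3)))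
        = γ • (ketPlus ⊗ₜ[ℂ] RF) := by
  have hr1ne : r1 ≠ 0 := fun h => by simp [h] at hr1
  have hf0ne : f0 ≠ 0 := fun h => by simp [h] at hf0
  -- δ = 0
  obtain ⟨w0, hw0⟩ := hund0
  have hδ : δ = 0 := by
    have h := congrArg (projT (M := R ⊗[ℂ] F) 1) ((hW0 f0).symm.trans hw0)
    simp only [map_add, map_smul, projT_tmul, ket0_apply_1, ket1_apply_1,
      zero_smul, one_smul, smul_zero, zero_add, add_zero] at h
    by_contra hδ
    exact tmul_ne_zero' hr1ne hf0ne (by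
      have := congrArg (fun z => δ⁻¹ • z) h
      simpa [smul_smul, inv_mul_cancel₀ hδ] using this)
  have hγ : ‖γ‖ = 1 := by
    have : ‖γ‖ ^ 2 = 1 := by simpa [hδ] using hnorm
    nlinarith [norm_nonneg γ]
  have hγne : γ ≠ 0 := fun h => by simp [h] at hγ
  -- rewrite W values with δ = 0
  have hWA : W (ket0 ⊗ₜ[ℂ] (r ⊗ₜ[ℂ] f0)) = γ • (ket0 ⊗ₜ[ℂ] (r0 ⊗ₜ[ℂ] f0)) := by
    rw [hW0 f0, hδ]; simp
  have hWB : W (ket1 ⊗ₜ[ℂ] (r ⊗ₜ[ℂ] f3)) = γ • (ket1 ⊗ₜ[ℂ] (r3 ⊗ₜ[ℂ] f3)) := by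
    rw [hW1 f3, hδ]; simp
  -- use the plus condition
  obtain ⟨w, hw⟩ := hundPlus
  have hs2 : ((Real.sqrt 2 : ℂ))⁻¹ ≠ 0 := by
    simp [Complex.ext_iff, Real.sqrt_eq_zero', show (0:ℝ) < 2 by norm_num]
  rw [hWA, hWB] at hw
  simp only [ketPlus, TensorProduct.smul_tmul', TensorProduct.add_tmul] at hw
  have hw0' : γ • (r0 ⊗ₜ[ℂ] f0) = w := by
    have h := congrArg (projT (M := R ⊗[ℂ] F) 0) hw
    simp only [map_add, map_smul, projT_tmul, PiLp.smul_apply, smul_eq_mul,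
      ket0_apply_0, ket1_apply_0, mul_zero, mul_one,
      zero_smul, one_smul, smul_zero, zero_add, add_zero, smul_smul] at h
    have := congrArg (fun z => (Real.sqrt 2 : ℂ) • z) h
    simpa [smul_smul, mul_inv_cancel₀ (by simpa using hs2 : (Real.sqrt 2 : ℂ) ≠ 0)] using this
  have hw1' : γ • (r3 ⊗ₜ[ℂ] f3) = w := by
    have h := congrArg (projT (M := R ⊗[ℂ] F) 1) hw
    simp only [map_add, map_smul, projT_tmul, PiLp.smul_apply, smul_eq_mul,
      ket0_apply_1, ket1_apply_1, mul_zero, mul_one,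
      zero_smul, one_smul, smul_zero, zero_add, add_zero, smul_smul] at h
    have := congrArg (fun z => (Real.sqrt 2 : ℂ) • z) h
    simpa [smul_smul, mul_inv_cancel₀ (by simpa using hs2 : (Real.sqrt 2 : ℂ) ≠ 0)] using this
  have hAB : r0 ⊗ₜ[ℂ] f0 = r3 ⊗ₜ[ℂ] f3 :=
    smul_right_injective _ hγne (hw0'.trans hw1'.symm)
  refine ⟨hδ, hγ, hAB, r0 ⊗ₜ[ℂ] f0, hWA, ?_, ?_⟩
  · rw [hWB, hAB]
  · rw [hWA, hWB, hAB, ketPlus, ← TensorProduct.smul_tmul', TensorProduct.add_tmul]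
    module
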